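/- Let n ≥ 2 be an integer, R > 0, and let φ : [R,∞) → ℝ be a solution of φ'(r) = (1+φ(r)²)(1 − (n−1)φ(r)/r). Then r³·(φ(r) − r/(n−1) + 1/r) → (n−4)(n−1) as r → ∞; equivalently φ(r) = r/(n−1) − 1/r + (n−1)(n−4)/r³ + o(r⁻³). -/

import Mathlib

noncomputable section
open Set Filter
set_option maxHeartbeats 1000000

lemma stay_nonneg {a : ℝ} {d d' : ℝ → ℝ}
    (hd : ∀ r ∈ Ici a, HasDerivWithinAt d (d' r) (Ici a) r)
    (key : ∀ r ∈ Ici a, d r = 0 → 0 < d' r)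
    (h0 : 0 ≤ d a) : ∀ r ∈ Ici a, 0 ≤ d r := by
  intro s hs
  rw [mem_Ici] at hs
  by_contra hneg
  push_neg at hneg
  have hcont : ContinuousOn d (Ici a) := fun r hr => (hd r hr).continuousWithinAt
  have hSclosed : IsClosed (Icc a s ∩ d ⁻¹' Ici 0) :=
    (hcont.mono Icc_subset_Ici_self).preimage_isClosed_of_isClosed isClosed_Icc isClosed_Ici
  have hSne : (Icc a s ∩ d ⁻¹' Ici 0).Nonempty := ⟨a, ⟨le_refl a, hs⟩, h0⟩
  have hSbdd : BddAbove (Icc a s ∩ d ⁻¹' Ici 0) := ⟨s, fun r hr => hr.1.2⟩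
  set t := sSup (Icc a s ∩ d ⁻¹' Ici 0) with ht
  have htmem : t ∈ Icc a s ∩ d ⁻¹' Ici 0 := hSclosed.csSup_mem hSne hSbdd
  have hta : a ≤ t := htmem.1.1
  have hts : t ≤ s := htmem.1.2
  have htd : (0:ℝ) ≤ d t := htmem.2
  have hts' : t < s := lt_of_le_of_ne hts (fun h => absurd (h ▸ htd) (not_le.2 hneg))
  have hneg' : ∀ r ∈ Ioc t s, d r < 0 := by
    intro r hr
    by_contra h
    push_neg at h
    have : r ≤ t := le_csSup hSbdd ⟨⟨hta.trans hr.1.le, hr.2⟩, h⟩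
    exact absurd hr.1 (not_lt.2 this)
  have hd0 : d t = 0 := by
    refine le_antisymm ?_ htd
    have hc : Tendsto d (nhdsWithin t (Ioi t)) (nhds (d t)) :=
      (hcont t (mem_Ici.2 hta)).mono (fun x hx => le_trans hta (le_of_lt hx))
    have hev : ∀ᶠ r in nhdsWithin t (Ioi t), d r ≤ 0 :=
      Filter.eventually_of_mem (Ioc_mem_nhdsGT_of_mem ⟨le_refl t, hts'⟩)
        (fun r hr => (hneg' r hr).le)
    exact le_of_tendsto hc hev
  have hpos := key t (mem_Ici.2 hta) hd0
  have hslope : Tendsto (slope d t) (nhdsWithin t (Ioi t)) (nhds (d' t)) := by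
    have h1 := (hd t (mem_Ici.2 hta)).mono (Ici_subset_Ici.2 hta)
    have h2 := hasDerivWithinAt_iff_tendsto_slope.1 h1
    rwa [Ici_sdiff_left] at h2
  have hev1 : ∀ᶠ r in nhdsWithin t (Ioi t), 0 < slope d t r :=
    hslope.eventually_const_lt hpos
  have hev2 : ∀ᶠ r in nhdsWithin t (Ioi t), r ∈ Ioc t s :=
    Filter.eventually_of_mem (Ioc_mem_nhdsGT_of_mem ⟨le_refl t, hts'⟩) (fun r hr => hr)
  obtain ⟨r, hr1, hr2⟩ := (hev1.and hev2).exists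
  have : slope d t r = d r / (r - t) := by
    rw [slope_def_field, hd0, sub_zero]
  rw [this] at hr1
  have hrt : 0 < r - t := sub_pos.2 hr2.1
  have hdr : 0 < d r := by
    have h3 := mul_pos hr1 hrt
    rwa [div_mul_cancel₀ _ (ne_of_gt hrt)] at h3
  exact absurd hdr (not_lt.2 (hneg' r hr2).le)

lemma escape_nonneg {a δ : ℝ} (hδ : 0 < δ) {d d' : ℝ → ℝ}
    (hd : ∀ r ∈ Ici a, HasDerivWithinAt d (d' r) (Ici a) r)
    (key : ∀ r ∈ Ici a, d r ≤ 0 → δ ≤ d' r) :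
    ∃ r, a ≤ r ∧ 0 ≤ d r := by
  by_contra h
  push_neg at h
  have hda : d a < 0 := h a (le_refl a)
  have hstay := stay_nonneg (a := a) (d := fun r => d r - δ/2 * r - (d a - δ/2 * a))
      (d' := fun r => d' r - δ/2)
      (fun r hr => (((hd r hr).sub ((hasDerivAt_id r).const_mul (δ/2)).hasDerivWithinAt).sub_const
        (d a - δ/2 * a)).congr_deriv (by ring))
      (fun r hr _ => by
        have h1 := key r hr (h r hr).le
        linarith)
      (by simp)
  set s := a + 2 * (1 - d a) / δ with hsdef
  have hsa : a ≤ s := by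
    rw [hsdef]
    have : 0 ≤ 2 * (1 - d a) / δ := div_nonneg (by linarith) hδ.le
    linarith
  have h2 := hstay s (mem_Ici.2 hsa)
  have h3 : d s ≥ 1 := by
    have hδ' : δ ≠ 0 := ne_of_gt hδ
    have : δ/2 * s - (δ/2 * a) = 1 - d a := by
      rw [hsdef]; field_simp; ring
    nlinarith [h2]
  linarith [h s hsa]

lemma eventually_stay_nonneg {a δ : ℝ} (hδ : 0 < δ) {d d' : ℝ → ℝ}
    (hd : ∀ r ∈ Ici a, HasDerivWithinAt d (d' r) (Ici a) r)
    (key : ∀ r ∈ Ici a, d r ≤ 0 → δ ≤ d' r) :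
    ∃ r₀, a ≤ r₀ ∧ ∀ r ∈ Ici r₀, 0 ≤ d r := by
  obtain ⟨r₀, hr₀a, hr₀⟩ := escape_nonneg hδ hd key
  refine ⟨r₀, hr₀a, stay_nonneg (fun r hr => (hd r (le_trans hr₀a hr)).mono (Ici_subset_Ici.2 hr₀a))
    (fun r hr hr2 => lt_of_lt_of_le hδ (key r (le_trans hr₀a hr) (le_of_eq hr2))) hr₀⟩

lemma exp_decay_deriv (C m : ℝ) (r : ℝ) :
    HasDerivAt (fun r : ℝ => C * Real.exp (-(r^2/(32*m))))
      (-(C * Real.exp (-(r^2/(32*m))) * (r/(16*m)))) r := by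
  have h1 : HasDerivAt (fun r : ℝ => -(r^2/(32*m))) (-(2*r/(32*m))) r := by
    have := (hasDerivAt_pow 2 r).div_const (32*m)
    exact this.neg.congr_deriv (by simp)
  have h2 := (h1.exp).const_mul C
  refine h2.congr_deriv ?_
  ring

lemma exp_comparison {a m : ℝ} (hm : 0 < m) (ha : 0 < a) {ψ ψ' : ℝ → ℝ}
    (hd : ∀ r ∈ Ici a, HasDerivWithinAt ψ (ψ' r) (Ici a) r)
    (key : ∀ r ∈ Ici a, 0 ≤ ψ r → ψ' r ≤ -(ψ r * r / (8*m))) :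
    ∀ r ∈ Ici a, ψ r ≤ (|ψ a| + 1) * Real.exp (a^2/(32*m)) * Real.exp (-(r^2/(32*m))) := by
  set C := (|ψ a| + 1) * Real.exp (a^2/(32*m)) with hC
  have hCpos : 0 < C := by positivity
  have main := stay_nonneg (a := a)
      (d := fun r => C * Real.exp (-(r^2/(32*m))) - ψ r)
      (d' := fun r => -(C * Real.exp (-(r^2/(32*m))) * (r/(16*m))) - ψ' r)
      (fun r hr => ((exp_decay_deriv C m r).hasDerivWithinAt).sub (hd r hr))
      ?_ ?_
  · intro r hr
    linarith [main r hr]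
  · intro r hr h0
    have hψr : ψ r = C * Real.exp (-(r^2/(32*m))) := by linarith
    have hψpos : 0 < ψ r := by rw [hψr]; positivity
    have hk := key r hr hψpos.le
    have hrpos : 0 < r := lt_of_lt_of_le ha hr
    have h8 : ψ r * r / (8*m) = 2 * (ψ r * r / (16*m)) := by
      field_simp; ring
    have h16 : 0 < ψ r * r / (16*m) := by positivity
    have heq : C * Real.exp (-(r^2/(32*m))) * (r/(16*m)) = ψ r * r / (16*m) := by
      rw [← hψr]; ring
    rw [heq]
    linarith
  · rw [mul_assoc, ← Real.exp_add]
    have : a^2/(32*m) + -(a^2/(32*m)) = 0 := by ring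
    rw [this, Real.exp_zero, mul_one]
    linarith [le_abs_self (ψ a)]

lemma cube_exp_decay (m : ℝ) (hm : 0 < m) :
    Tendsto (fun r : ℝ => r^3 * Real.exp (-(r^2/(32*m)))) atTop (nhds 0) := by
  apply squeeze_zero' (g := fun r : ℝ => r^3 * Real.exp (-r))
  · filter_upwards [eventually_ge_atTop (0:ℝ)] with r hr
    positivity
  · filter_upwards [eventually_ge_atTop (max 1 (32*m))] with r hr
    have hr1 : (1:ℝ) ≤ r := le_trans (le_max_left _ _) hr
    have hrm : 32*m ≤ r := le_trans (le_max_right _ _) hr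
    have h1 : r ≤ r^2/(32*m) := by
      rw [le_div_iff₀ (by positivity)]
      nlinarith
    have h2 : Real.exp (-(r^2/(32*m))) ≤ Real.exp (-r) := Real.exp_le_exp.2 (by linarith)
    have h3 : (0:ℝ) ≤ r^3 := by positivity
    exact mul_le_mul_of_nonneg_left h2 h3
  · exact Real.tendsto_pow_mul_exp_neg_atTop_nhds_zero 3

lemma expand_identity (m b r : ℝ) (hm : m ≠ 0) (hr : r ≠ 0) :
    (1/m + 1/r^2 - 3*b/r^4)
      - (1 + (r/m - 1/r + b/r^3)^2) * (1 - m*(r/m - 1/r + b/r^3)/r)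
    = (3 - m + b/m)/r^2 + (b*m - 7*b - m)/r^4 + (3*b*m + 2*b^2)/r^6
      - 3*b^2*m/r^8 + b^3*m/r^10 := by
  field_simp
  ring

lemma tail_bound {m b r : ℝ} (hm : 1 ≤ m) (hr1 : 1 ≤ r) :
    -((|b*m - 7*b - m| + |3*b*m + 2*b^2| + 3*b^2*m + |b|^3*m) / r^4)
      ≤ (b*m - 7*b - m)/r^4 + (3*b*m + 2*b^2)/r^6 - 3*b^2*m/r^8 + b^3*m/r^10 := by
  have hr0 : (0:ℝ) < r := lt_of_lt_of_le one_pos hr1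
  have h46 : r^4 ≤ r^6 := pow_le_pow_right₀ hr1 (by norm_num)
  have h48 : r^4 ≤ r^8 := pow_le_pow_right₀ hr1 (by norm_num)
  have h410 : r^4 ≤ r^10 := pow_le_pow_right₀ hr1 (by norm_num)
  have hp4 : (0:ℝ) < r^4 := by positivity
  have hp6 : (0:ℝ) < r^6 := by positivity
  have hp8 : (0:ℝ) < r^8 := by positivity
  have hp10 : (0:ℝ) < r^10 := by positivity
  have t4 : -(|b*m - 7*b - m|/r^4) ≤ (b*m - 7*b - m)/r^4 := by
    rw [← neg_div]
    gcongr
    exact neg_abs_le _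
  have t6 : -(|3*b*m + 2*b^2|/r^4) ≤ (3*b*m + 2*b^2)/r^6 := by
    have h1 : -(|3*b*m + 2*b^2|/r^6) ≤ (3*b*m + 2*b^2)/r^6 := by
      rw [← neg_div]; gcongr; exact neg_abs_le _
    have h2 : |3*b*m + 2*b^2|/r^6 ≤ |3*b*m + 2*b^2|/r^4 :=
      div_le_div_of_nonneg_left (abs_nonneg _) hp4 h46
    linarith
  have t8 : -(3*b^2*m/r^4) ≤ -(3*b^2*m/r^8) := by
    have : 3*b^2*m/r^8 ≤ 3*b^2*m/r^4 := div_le_div_of_nonneg_left (by positivity) hp4 h48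
    linarith
  have t10 : -(|b|^3*m/r^4) ≤ b^3*m/r^10 := by
    have hb3 : -(|b|^3*m) ≤ b^3*m := by
      have : -|b|^3 ≤ b^3 := by
        have := neg_abs_le (b^3)
        rwa [abs_pow] at this
      nlinarith
    have h1 : -(|b|^3*m)/r^10 ≤ b^3*m/r^10 := by gcongr
    have h2 : |b|^3*m/r^10 ≤ |b|^3*m/r^4 := div_le_div_of_nonneg_left (by positivity) hp4 h410
    have h3 : -(|b|^3*m)/r^10 = -(|b|^3*m/r^10) := by ring
    linarith [h3 ▸ h1]
  have hsplit : ((|b*m - 7*b - m| + |3*b*m + 2*b^2| + 3*b^2*m + |b|^3*m) / r^4)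
      = |b*m - 7*b - m|/r^4 + |3*b*m + 2*b^2|/r^4 + 3*b^2*m/r^4 + |b|^3*m/r^4 := by
    ring
  linarith [hsplit]

lemma T0_bound_upper {m b ε r : ℝ} (hm : 1 ≤ m) (hε : 0 < ε)
    (hbm : 3 - m + b/m = ε/m)
    (hr1 : 1 ≤ r)
    (hrK : 2*m*((|b*m - 7*b - m| + |3*b*m + 2*b^2| + 3*b^2*m + |b|^3*m) + 1) ≤ ε * r) :
    (1 + (r/m - 1/r + b/r^3)^2) * (1 - m*(r/m - 1/r + b/r^3)/r)
      ≤ (1/m + 1/r^2 - 3*b/r^4) - ε/(2*m*r^2) := by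
  have hm0 : (0:ℝ) < m := lt_of_lt_of_le one_pos hm
  have hr0 : (0:ℝ) < r := lt_of_lt_of_le one_pos hr1
  have hid := expand_identity m b r (ne_of_gt hm0) (ne_of_gt hr0)
  set K := |b*m - 7*b - m| + |3*b*m + 2*b^2| + 3*b^2*m + |b|^3*m with hK
  have hKnn : 0 ≤ K := by positivity
  have htail := tail_bound (b := b) hm hr1
  have hKr : K/r^4 ≤ ε/(2*m*r^2) := by
    rw [div_le_div_iff₀ (by positivity) (by positivity)]
    nlinarith [mul_le_mul_of_nonneg_right hrK (by positivity : (0:ℝ) ≤ r^3),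
      mul_le_mul_of_nonneg_left (pow_le_pow_right₀ hr1 (show 2 ≤ 3 by norm_num))
        (by positivity : (0:ℝ) ≤ 2*m*K),
      mul_pos hm0 (pow_pos hr0 3)]
  have hfirst : (3 - m + b/m)/r^2 = 2 * (ε/(2*m*r^2)) := by
    rw [hbm]; field_simp
  linarith [hid, htail, hKr, hfirst]

lemma tail_bound' {m b r : ℝ} (hm : 1 ≤ m) (hr1 : 1 ≤ r) :
    (b*m - 7*b - m)/r^4 + (3*b*m + 2*b^2)/r^6 - 3*b^2*m/r^8 + b^3*m/r^10
      ≤ (|b*m - 7*b - m| + |3*b*m + 2*b^2| + 3*b^2*m + |b|^3*m) / r^4 := by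
  have hr0 : (0:ℝ) < r := lt_of_lt_of_le one_pos hr1
  have h46 : r^4 ≤ r^6 := pow_le_pow_right₀ hr1 (by norm_num)
  have h410 : r^4 ≤ r^10 := pow_le_pow_right₀ hr1 (by norm_num)
  have hp4 : (0:ℝ) < r^4 := by positivity
  have t4 : (b*m - 7*b - m)/r^4 ≤ |b*m - 7*b - m|/r^4 := by gcongr; exact le_abs_self _
  have t6 : (3*b*m + 2*b^2)/r^6 ≤ |3*b*m + 2*b^2|/r^4 := by
    have h1 : (3*b*m + 2*b^2)/r^6 ≤ |3*b*m + 2*b^2|/r^6 := by gcongr; exact le_abs_self _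
    have h2 : |3*b*m + 2*b^2|/r^6 ≤ |3*b*m + 2*b^2|/r^4 :=
      div_le_div_of_nonneg_left (abs_nonneg _) hp4 h46
    linarith
  have t8 : -(3*b^2*m/r^8) ≤ 3*b^2*m/r^4 := by
    have h1 : (0:ℝ) ≤ 3*b^2*m/r^8 := by positivity
    have h2 : (0:ℝ) ≤ 3*b^2*m/r^4 := by positivity
    linarith
  have t10 : b^3*m/r^10 ≤ |b|^3*m/r^4 := by
    have hb3 : b^3*m ≤ |b|^3*m := by
      have : b^3 ≤ |b|^3 := by
        have := le_abs_self (b^3)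
        rwa [abs_pow] at this
      nlinarith
    have h1 : b^3*m/r^10 ≤ |b|^3*m/r^10 := by gcongr
    have h2 : |b|^3*m/r^10 ≤ |b|^3*m/r^4 := div_le_div_of_nonneg_left (by positivity) hp4 h410
    linarith
  have hsplit : ((|b*m - 7*b - m| + |3*b*m + 2*b^2| + 3*b^2*m + |b|^3*m) / r^4)
      = |b*m - 7*b - m|/r^4 + |3*b*m + 2*b^2|/r^4 + 3*b^2*m/r^4 + |b|^3*m/r^4 := by
    ring
  linarith [hsplit]

lemma T0_bound_lower {m b ε r : ℝ} (hm : 1 ≤ m) (hε : 0 < ε)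
    (hbm : 3 - m + b/m = -(ε/m))
    (hr1 : 1 ≤ r)
    (hrK : 2*m*((|b*m - 7*b - m| + |3*b*m + 2*b^2| + 3*b^2*m + |b|^3*m) + 1) ≤ ε * r) :
    (1/m + 1/r^2 - 3*b/r^4) + ε/(2*m*r^2)
      ≤ (1 + (r/m - 1/r + b/r^3)^2) * (1 - m*(r/m - 1/r + b/r^3)/r) := by
  have hm0 : (0:ℝ) < m := lt_of_lt_of_le one_pos hm
  have hr0 : (0:ℝ) < r := lt_of_lt_of_le one_pos hr1
  have hid := expand_identity m b r (ne_of_gt hm0) (ne_of_gt hr0)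
  set K := |b*m - 7*b - m| + |3*b*m + 2*b^2| + 3*b^2*m + |b|^3*m with hK
  have hKnn : 0 ≤ K := by positivity
  have htail := tail_bound' (b := b) hm hr1
  have hKr : K/r^4 ≤ ε/(2*m*r^2) := by
    rw [div_le_div_iff₀ (by positivity) (by positivity)]
    nlinarith [mul_le_mul_of_nonneg_right hrK (by positivity : (0:ℝ) ≤ r^3),
      mul_le_mul_of_nonneg_left (pow_le_pow_right₀ hr1 (show 2 ≤ 3 by norm_num))
        (by positivity : (0:ℝ) ≤ 2*m*K),
      mul_pos hm0 (pow_pos hr0 3)]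
  have hfirst : (3 - m + b/m)/r^2 = -(2 * (ε/(2*m*r^2))) := by
    rw [hbm]; field_simp
  linarith [hid, htail, hKr, hfirst]

lemma key_upper {m b ε r p : ℝ} (hm : 1 ≤ m) (hε : 0 < ε)
    (hbm : 3 - m + b/m = ε/m)
    (hr1 : 1 ≤ r) (hrb : |b| ≤ r) (hr40 : 40*m ≤ r)
    (hrK : 2*m*((|b*m - 7*b - m| + |3*b*m + 2*b^2| + 3*b^2*m + |b|^3*m) + 1) ≤ ε * r)
    (hlow : r/m - 8/r ≤ p) (hup : p ≤ r/m)
    (hB : r/m - 1/r + b/r^3 ≤ p) :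
    (1 + p^2) * (1 - m*p/r)
      ≤ (1/m + 1/r^2 - 3*b/r^4) - (p - (r/m - 1/r + b/r^3)) * r/(8*m) := by
  have hm0 : (0:ℝ) < m := lt_of_lt_of_le one_pos hm
  have hr0 : (0:ℝ) < r := lt_of_lt_of_le one_pos hr1
  have hr2 : r ≤ r^2 := by nlinarith only [hr1, hr0]
  have hbr : b ≤ r := le_trans (le_abs_self b) hrb
  have hbr' : -r ≤ b := by have h1 := neg_abs_le b; linarith only [h1, hrb]
  have hT0 := T0_bound_upper hm hε hbm hr1 hrK
  clear hrK hbm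
  set B := r/m - 1/r + b/r^3 with hBdef
  set h := p - B with hhdef
  have hh0 : 0 ≤ h := by rw [hhdef]; linarith only [hB]
  have hBub : B ≤ r/m := by
    rw [hBdef]
    have e : r/m - (r/m - 1/r + b/r^3) = (r^2 - b)/r^3 := by field_simp; ring
    have h1 : (0:ℝ) ≤ (r^2 - b)/r^3 :=
      div_nonneg (by linarith only [hbr, hr2]) (by positivity)
    linarith only [e ▸ h1]
  have hB0 : (0:ℝ) ≤ B := by
    rw [hBdef]
    have e : r/m - 1/r + b/r^3 = (r^4 - m*r^2 + b*m)/(m*r^3) := by field_simp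
    rw [e]
    apply div_nonneg _ (by positivity)
    nlinarith only [mul_le_mul_of_nonneg_left (hr40.trans hr2) (by positivity : (0:ℝ) ≤ r^2),
      mul_le_mul_of_nonneg_left hr2 hm0.le, mul_le_mul_of_nonneg_left hbr' hm0.le,
      mul_le_mul_of_nonneg_left hr2 hm0.le, hm0, hr0, hr2]
  have hfac_eq : 1 - m*B/r = (r^2 - b)*m/r^4 := by rw [hBdef]; field_simp; ring
  have hfac0 : (0:ℝ) ≤ 1 - m*B/r := by
    rw [hfac_eq]
    exact div_nonneg (mul_nonneg (by linarith only [hbr, hr2]) hm0.le) (by positivity)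
  have hfac_ub : 1 - m*B/r ≤ 2*m/r^2 := by
    rw [hfac_eq, div_le_div_iff₀ (by positivity) (by positivity)]
    nlinarith only [mul_le_mul_of_nonneg_left (show -b ≤ r by linarith only [hbr'])
        (mul_pos hm0 (pow_pos hr0 2)).le,
      mul_le_mul_of_nonneg_left hr2 (mul_pos hm0 (pow_pos hr0 2)).le]
  have hh2 : h ≤ 2/r := by
    have e : r/m - B = (r^2 - b)/r^3 := by rw [hBdef]; field_simp; ring
    have h2 : (r^2 - b)/r^3 ≤ 2/r := by
      rw [div_le_div_iff₀ (by positivity) hr0]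
      nlinarith only [hbr', hr2, hr0, pow_pos hr0 2]
    rw [hhdef]
    linarith only [hup, e, h2]
  have hp2m : r/(2*m) ≤ p := by
    have e : r/m - 8/r - r/(2*m) = (r^2 - 16*m)/(2*m*r) := by field_simp; ring
    have h2 : (0:ℝ) ≤ (r^2 - 16*m)/(2*m*r) := by
      apply div_nonneg _ (by positivity)
      nlinarith only [hr40.trans hr2, hm0]
    linarith only [hlow, e, h2]
  have hp0 : 0 ≤ p := le_trans (by positivity) hp2m
  have hdecomp : (1 + p^2) * (1 - m*p/r)
      = (1 + B^2) * (1 - m*B/r) + (2*B*h + h^2)*(1 - m*B/r) - (1 + p^2)*(m*h/r) := by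
    rw [hhdef, hBdef]; field_simp; ring
  have hT1 : (2*B*h + h^2)*(1 - m*B/r) ≤ 5*h/r := by
    have h1 : 2*B*h + h^2 ≤ (2*r/m + 2/r)*h := by
      have a1 : 2*B*h ≤ 2*(r/m)*h := by
        nlinarith only [mul_le_mul_of_nonneg_right hBub hh0]
      have a2 : h^2 ≤ (2/r)*h := by
        nlinarith only [mul_le_mul_of_nonneg_right hh2 hh0]
      ring_nf at a1 a2 ⊢
      linarith only [a1, a2]
    have h2 : 0 ≤ 2*B*h + h^2 := by positivity
    have h3 : (2*B*h + h^2)*(1 - m*B/r) ≤ ((2*r/m + 2/r)*h)*(2*m/r^2) :=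
      mul_le_mul h1 hfac_ub hfac0 (by positivity)
    have h4 : ((2*r/m + 2/r)*h)*(2*m/r^2) = 4*h/r + 4*m*h/r^3 := by field_simp; ring
    have h5 : 4*m*h/r^3 ≤ h/r := by
      rw [div_le_div_iff₀ (by positivity) hr0]
      nlinarith only [mul_le_mul_of_nonneg_right (hr40.trans hr2) (mul_nonneg hh0 hr0.le),
        mul_nonneg (mul_nonneg hm0.le hh0) hr0.le]
    ring_nf at h3 h4 h5 ⊢
    linarith only [h3, h4, h5]
  have hT2 : h*r/(4*m) ≤ (1 + p^2)*(m*h/r) := by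
    have hpsq : r^2/(4*m^2) ≤ p^2 := by
      have e : (r/(2*m))^2 = r^2/(4*m^2) := by field_simp; ring
      nlinarith only [mul_le_mul hp2m hp2m (by positivity : (0:ℝ) ≤ r/(2*m)) hp0, e]
    have h1 : (r^2/(4*m^2))*(m*h/r) ≤ (1+p^2)*(m*h/r) :=
      mul_le_mul_of_nonneg_right (by linarith only [hpsq]) (by positivity)
    have h2 : (r^2/(4*m^2))*(m*h/r) = h*r/(4*m) := by field_simp
    linarith only [h1, h2]
  have hfin : 5*h/r ≤ h*r/(8*m) := by
    rw [div_le_div_iff₀ hr0 (by positivity)]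
    nlinarith only [mul_le_mul_of_nonneg_right (hr40.trans hr2) hh0, hm0, hr0, hh0]
  have hε2 : 0 ≤ ε/(2*m*r^2) := by positivity
  ring_nf at hdecomp hT0 hT1 hT2 hfin hε2 ⊢
  linarith only [hdecomp, hT0, hT1, hT2, hfin, hε2]

lemma key_lower {m b ε r p : ℝ} (hm : 1 ≤ m) (hε : 0 < ε)
    (hbm : 3 - m + b/m = -(ε/m))
    (hr1 : 1 ≤ r) (hrb : |b| ≤ r) (hr40 : 40*m ≤ r)
    (hrK : 2*m*((|b*m - 7*b - m| + |3*b*m + 2*b^2| + 3*b^2*m + |b|^3*m) + 1) ≤ ε * r)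
    (hlow : r/m - 8/r ≤ p) (hup : p ≤ r/m)
    (hB : p ≤ r/m - 1/r + b/r^3) :
    (1/m + 1/r^2 - 3*b/r^4) + ((r/m - 1/r + b/r^3) - p)*r/(8*m)
      ≤ (1 + p^2) * (1 - m*p/r) := by
  have hm0 : (0:ℝ) < m := lt_of_lt_of_le one_pos hm
  have hr0 : (0:ℝ) < r := lt_of_lt_of_le one_pos hr1
  have hr2 : r ≤ r^2 := by nlinarith only [hr1, hr0]
  have hbr : b ≤ r := le_trans (le_abs_self b) hrb
  have hbr' : -r ≤ b := by have h1 := neg_abs_le b; linarith only [h1, hrb]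
  have hT0 := T0_bound_lower hm hε hbm hr1 hrK
  clear hrK hbm
  set B := r/m - 1/r + b/r^3 with hBdef
  set h := B - p with hhdef
  have hh0 : 0 ≤ h := by rw [hhdef]; linarith only [hB]
  have hBub : B ≤ r/m := by
    rw [hBdef]
    have e : r/m - (r/m - 1/r + b/r^3) = (r^2 - b)/r^3 := by field_simp; ring
    have h1 : (0:ℝ) ≤ (r^2 - b)/r^3 :=
      div_nonneg (by linarith only [hbr, hr2]) (by positivity)
    linarith only [e ▸ h1]
  have hB0 : (0:ℝ) ≤ B := by
    rw [hBdef]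
    have e : r/m - 1/r + b/r^3 = (r^4 - m*r^2 + b*m)/(m*r^3) := by field_simp
    rw [e]
    apply div_nonneg _ (by positivity)
    nlinarith only [mul_le_mul_of_nonneg_left (hr40.trans hr2) (by positivity : (0:ℝ) ≤ r^2),
      mul_le_mul_of_nonneg_left hr2 hm0.le, mul_le_mul_of_nonneg_left hbr' hm0.le,
      hm0, hr0, hr2]
  have hfac_eq : 1 - m*B/r = (r^2 - b)*m/r^4 := by rw [hBdef]; field_simp; ring
  have hfac0 : (0:ℝ) ≤ 1 - m*B/r := by
    rw [hfac_eq]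
    exact div_nonneg (mul_nonneg (by linarith only [hbr, hr2]) hm0.le) (by positivity)
  have hfac_ub : 1 - m*B/r ≤ 2*m/r^2 := by
    rw [hfac_eq, div_le_div_iff₀ (by positivity) (by positivity)]
    nlinarith only [mul_le_mul_of_nonneg_left (show -b ≤ r by linarith only [hbr'])
        (mul_pos hm0 (pow_pos hr0 2)).le,
      mul_le_mul_of_nonneg_left hr2 (mul_pos hm0 (pow_pos hr0 2)).le]
  have hh8 : h ≤ 8/r := by
    have e : B - (r/m - 8/r) = (7*r^2 + b)/r^3 := by rw [hBdef]; field_simp; ring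
    have h2 : (7*r^2 + b)/r^3 ≤ 8/r := by
      rw [div_le_div_iff₀ (by positivity) hr0]
      nlinarith only [hbr, hr2, hr0, pow_pos hr0 2]
    rw [hhdef]
    linarith only [hlow, e, h2]
  have hp2m : r/(2*m) ≤ p := by
    have e : r/m - 8/r - r/(2*m) = (r^2 - 16*m)/(2*m*r) := by field_simp; ring
    have h2 : (0:ℝ) ≤ (r^2 - 16*m)/(2*m*r) := by
      apply div_nonneg _ (by positivity)
      nlinarith only [hr40.trans hr2, hm0]
    linarith only [hlow, e, h2]
  have hp0 : 0 ≤ p := le_trans (by positivity) hp2m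
  have hdecomp : (1 + p^2) * (1 - m*p/r)
      = (1 + B^2) * (1 - m*B/r) + (-(2*B*h) + h^2)*(1 - m*B/r) + (1 + p^2)*(m*h/r) := by
    have hp : p = B - h := by rw [hhdef]; ring
    rw [hp, hBdef]; field_simp; ring
  have hT1 : -(4*h/r) ≤ (-(2*B*h) + h^2)*(1 - m*B/r) := by
    have h1 : -(2*(r/m)*h) ≤ -(2*B*h) + h^2 := by
      nlinarith only [mul_le_mul_of_nonneg_right hBub hh0, sq_nonneg h]
    have h2 : (-(2*(r/m)*h))*(1 - m*B/r) ≤ (-(2*B*h) + h^2)*(1 - m*B/r) :=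
      mul_le_mul_of_nonneg_right h1 hfac0
    have h3 : (-(2*(r/m)*h))*(2*m/r^2) ≤ (-(2*(r/m)*h))*(1 - m*B/r) := by
      apply mul_le_mul_of_nonpos_left hfac_ub
      have : 0 ≤ 2*(r/m)*h := by positivity
      linarith only [this]
    have h4 : (-(2*(r/m)*h))*(2*m/r^2) = -(4*h/r) := by field_simp; ring
    linarith only [h2, h3, h4]
  have hT2 : h*r/(4*m) ≤ (1 + p^2)*(m*h/r) := by
    have hpsq : r^2/(4*m^2) ≤ p^2 := by
      have e : (r/(2*m))^2 = r^2/(4*m^2) := by field_simp; ring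
      nlinarith only [mul_le_mul hp2m hp2m (by positivity : (0:ℝ) ≤ r/(2*m)) hp0, e]
    have h1 : (r^2/(4*m^2))*(m*h/r) ≤ (1+p^2)*(m*h/r) :=
      mul_le_mul_of_nonneg_right (by linarith only [hpsq]) (by positivity)
    have h2 : (r^2/(4*m^2))*(m*h/r) = h*r/(4*m) := by field_simp
    linarith only [h1, h2]
  have hfin : 4*h/r ≤ h*r/(8*m) := by
    rw [div_le_div_iff₀ hr0 (by positivity)]
    nlinarith only [mul_le_mul_of_nonneg_right (hr40.trans hr2) hh0,
      mul_nonneg hm0.le hh0]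
  have hε2 : 0 ≤ ε/(2*m*r^2) := by positivity
  ring_nf at hdecomp hT0 hT1 hT2 hfin hε2 ⊢
  linarith only [hdecomp, hT0, hT1, hT2, hfin, hε2]

lemma hasDerivAt_c_div (c r : ℝ) (hr : r ≠ 0) : HasDerivAt (fun x => c / x) (-(c/r^2)) r := by
  simpa [div_eq_mul_inv, mul_neg] using (hasDerivAt_inv hr).const_mul c

lemma hasDerivAt_c_div_cube (c r : ℝ) (hr : r ≠ 0) :
    HasDerivAt (fun x => c / x^3) (-(3*c/r^4)) r := by
  have h := (hasDerivAt_const r c).div (hasDerivAt_pow 3 r) (pow_ne_zero 3 hr)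
  refine h.congr_deriv ?_
  field_simp
  ring

lemma hasDerivAt_barrier (m b r : ℝ) (hm : m ≠ 0) (hr : r ≠ 0) :
    HasDerivAt (fun x => x/m - 1/x + b/x^3) (1/m + 1/r^2 - 3*b/r^4) r := by
  have h1 := ((hasDerivAt_id r).div_const m).sub (hasDerivAt_c_div 1 r hr)
  have h := h1.add (hasDerivAt_c_div_cube b r hr)
  refine h.congr_deriv ?_
  ring

lemma strip_lemma {R m : ℝ} (hR : 0 < R) (hm : 1 ≤ m) {φ : ℝ → ℝ}
    (hφ : ∀ r ∈ Ici R, HasDerivWithinAt φ ((1 + φ r ^ 2) * (1 - m * φ r / r)) (Ici R) r) :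
    ∃ a₂, R ≤ a₂ ∧ 40*m + 40 ≤ a₂ ∧
      ∀ r ∈ Ici a₂, r/m - 8/r ≤ φ r ∧ φ r ≤ r/m := by
  have hm0 : (0:ℝ) < m := lt_of_lt_of_le one_pos hm
  set a₁ := max R (40*m + 40) with ha₁def
  have ha₁R : R ≤ a₁ := le_max_left _ _
  have ha₁m : 40*m + 40 ≤ a₁ := le_max_right _ _
  have ha₁0 : (0:ℝ) < a₁ := lt_of_lt_of_le (by linarith) ha₁m
  have hD : ∀ a, a₁ ≤ a → ∀ r ∈ Ici a,
      HasDerivWithinAt φ ((1 + φ r ^ 2) * (1 - m * φ r / r)) (Ici a) r := by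
    intro a ha r hr
    exact (hφ r (le_trans ha₁R (le_trans ha hr))).mono
      (Ici_subset_Ici.2 (le_trans ha₁R ha))
  -- Claim 1: eventually φ ≥ 1
  obtain ⟨r₁, hr₁a, hΦ1'⟩ := eventually_stay_nonneg (a := a₁) (δ := 1/2)
    (d := fun r => φ r - 1)
    (d' := fun r => (1 + φ r ^ 2) * (1 - m * φ r / r))
    one_half_pos
    (fun r hr => (hD a₁ le_rfl r hr).sub_const 1)
    (by
      intro r hr hle
      have hrm : 40*m + 40 ≤ r := le_trans ha₁m hr
      have hr0 : (0:ℝ) < r := by linarith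
      have hfac : 1/2 ≤ 1 - m * φ r / r := by
        have h1 : m * φ r / r ≤ 1/2 := by
          rw [div_le_iff₀ hr0]
          nlinarith only [hle, hm0, hrm, hm]
        linarith only [h1]
      have h1 : (1:ℝ) ≤ 1 + φ r ^ 2 := by nlinarith only [sq_nonneg (φ r)]
      have hgoal : (1:ℝ) * (1/2) ≤ (1 + φ r ^ 2) * (1 - m * φ r / r) :=
        mul_le_mul h1 hfac (by norm_num) (by positivity)
      linarith only [hgoal])
  have hΦ1 : ∀ r ∈ Ici r₁, 1 ≤ φ r := fun r hr => by linarith [hΦ1' r hr]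
  have hr₁m : 40*m + 40 ≤ r₁ := le_trans ha₁m hr₁a
  -- Claim 2: eventually φ ≥ r/(2m)
  obtain ⟨r₂, hr₂a, hΦ2'⟩ := eventually_stay_nonneg (a := r₁) (δ := 1/4)
    (d := fun r => φ r - r/(2*m))
    (d' := fun r => (1 + φ r ^ 2) * (1 - m * φ r / r) - 1/(2*m))
    (by norm_num)
    (fun r hr => (hD r₁ hr₁a r hr).sub
      (((hasDerivAt_id r).div_const (2*m)).hasDerivWithinAt))
    (by
      intro r hr hle
      have hrm : 40*m + 40 ≤ r := le_trans hr₁m hr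
      have hr0 : (0:ℝ) < r := by linarith
      have hφ1 : 1 ≤ φ r := hΦ1 r hr
      have hfac : 1/2 ≤ 1 - m * φ r / r := by
        have e : m*(r/(2*m)) = r/2 := by field_simp
        have h2 : m * φ r ≤ m * (r/(2*m)) :=
          mul_le_mul_of_nonneg_left (by linarith only [hle]) hm0.le
        have h1 : m * φ r / r ≤ 1/2 := by
          rw [div_le_iff₀ hr0]
          linarith only [e, h2]
        linarith only [h1]
      have hsq : 2 ≤ 1 + φ r ^ 2 := by nlinarith only [hφ1]
      have hgoal : (2:ℝ) * (1/2) ≤ (1 + φ r ^ 2) * (1 - m * φ r / r) :=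
        mul_le_mul hsq hfac (by norm_num) (by positivity)
      have hm2 : 1/(2*m) ≤ 1/2 := by
        rw [div_le_div_iff₀ (by positivity) (by norm_num)]
        linarith only [hm]
      linarith only [hgoal, hm2])
  have hΦ2 : ∀ r ∈ Ici r₂, r/(2*m) ≤ φ r := fun r hr => by linarith [hΦ2' r hr]
  have hr₂m : 40*m + 40 ≤ r₂ := le_trans hr₁m hr₂a
  -- Claim 3: eventually φ ≥ r/m - 8/r
  obtain ⟨r₃, hr₃a, hΦ3'⟩ := eventually_stay_nonneg (a := r₂) (δ := 1/(2*m))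
    (d := fun r => φ r - (r/m - 8/r))
    (d' := fun r => (1 + φ r ^ 2) * (1 - m * φ r / r) - (1/m + 8/r^2))
    (by positivity)
    (fun r hr => by
      have hr0 : (0:ℝ) ≠ r := by
        have := le_trans hr₂m hr; intro h; linarith [this, hm0]
      exact (hD r₂ (le_trans hr₁a hr₂a) r hr).sub
        ((((hasDerivAt_id r).div_const m).sub (hasDerivAt_c_div 8 r (Ne.symm hr0))).congr_deriv
          (by ring)).hasDerivWithinAt)
    (by
      intro r hr hle
      have hrm : 40*m + 40 ≤ r := le_trans hr₂m hr
      have hr0 : (0:ℝ) < r := by linarith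
      have hφ2 : r/(2*m) ≤ φ r := hΦ2 r hr
      have hr2 : r ≤ r^2 := by nlinarith only [hrm, hm0]
      -- factor bound : 8m/r² ≤ 1 - mφ/r
      have hfac : 8*m/r^2 ≤ 1 - m * φ r / r := by
        have h1 : m * φ r / r ≤ 1 - 8*m/r^2 := by
          rw [div_le_iff₀ hr0]
          have e : (1 - 8*m/r^2)*r = r - 8*m/r := by field_simp
          rw [e]
          have h2 : m * φ r ≤ m * (r/m - 8/r) := by
            nlinarith only [hle, hm0]
          have e2 : m * (r/m - 8/r) = r - 8*m/r := by field_simp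
          linarith only [h2, e2]
        linarith only [h1]
      have hfac0 : (0:ℝ) ≤ 8*m/r^2 := by positivity
      -- 1 + φ² ≥ r²/(4m²)
      have hsq : r^2/(4*m^2) ≤ 1 + φ r ^ 2 := by
        have e : (r/(2*m))^2 = r^2/(4*m^2) := by field_simp; ring
        nlinarith only [mul_le_mul hφ2 hφ2 (by positivity : (0:ℝ) ≤ r/(2*m))
          (le_trans (by positivity) hφ2), e]
      have hgoal : (r^2/(4*m^2)) * (8*m/r^2) ≤ (1 + φ r ^ 2) * (1 - m * φ r / r) :=
        mul_le_mul hsq hfac hfac0 (by positivity)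
      have e3 : (r^2/(4*m^2)) * (8*m/r^2) = 2/m := by field_simp; ring
      have h82 : 8/r^2 ≤ 1/(2*m) := by
        rw [div_le_div_iff₀ (by positivity) (by positivity)]
        nlinarith only [hrm, hm0, hr2]
      have e4 : 2/m - 1/m - 1/(2*m) = 1/(2*m) := by field_simp; ring
      ring_nf at hgoal e3 h82 e4 ⊢
      linarith only [hgoal, e3, h82, e4])
  have hΦ3 : ∀ r ∈ Ici r₃, r/m - 8/r ≤ φ r := fun r hr => by linarith [hΦ3' r hr]
  have hr₃m : 40*m + 40 ≤ r₃ := le_trans hr₂m hr₃a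
  -- Claim 4: eventually φ ≤ r/m
  obtain ⟨r₄, hr₄a, hΦ4'⟩ := eventually_stay_nonneg (a := r₃) (δ := 1/(2*m))
    (d := fun r => r/m - φ r)
    (d' := fun r => 1/m - (1 + φ r ^ 2) * (1 - m * φ r / r))
    (by positivity)
    (fun r hr => (((hasDerivAt_id r).div_const m).hasDerivWithinAt).sub
      (hD r₃ (le_trans (le_trans hr₁a hr₂a) hr₃a) r hr))
    (by
      intro r hr hle
      have hrm : 40*m + 40 ≤ r := le_trans hr₃m hr
      have hr0 : (0:ℝ) < r := by linarith
      have hfac : m * φ r / r - 1 ≥ 0 := by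
        have e : m*(r/m) = r := by field_simp
        have h2 : m * (r/m) ≤ m * φ r :=
          mul_le_mul_of_nonneg_left (by linarith only [hle]) hm0.le
        have h1 : r ≤ m * φ r := by linarith only [e, h2]
        rw [ge_iff_le, sub_nonneg, le_div_iff₀ hr0]
        linarith only [h1]
      have hnp : 0 ≤ (1 + φ r ^ 2) * (m * φ r / r - 1) :=
        mul_nonneg (by positivity) hfac
      have hm2 : 1/(2*m) ≤ 1/m := by
        rw [div_le_div_iff₀ (by positivity) (by positivity)]
        linarith only [hm0]
      ring_nf at hnp hm2 ⊢
      linarith only [hnp, hm2])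
  refine ⟨r₄, le_trans ha₁R (le_trans hr₁a (le_trans hr₂a (le_trans hr₃a hr₄a))),
    le_trans hr₃m hr₄a, ?_⟩
  intro r hr
  constructor
  · exact hΦ3 r (le_trans hr₄a hr)
  · linarith [hΦ4' r hr]

lemma upper_bound_lemma {R m ε₀ : ℝ} (hm : 1 ≤ m) (hε₀ : 0 < ε₀) {φ : ℝ → ℝ}
    (hφ : ∀ r ∈ Ici R, HasDerivWithinAt φ ((1 + φ r ^ 2) * (1 - m * φ r / r)) (Ici R) r)
    {a₂ : ℝ} (ha₂R : R ≤ a₂) (ha₂m : 40*m + 40 ≤ a₂)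
    (hstrip : ∀ r ∈ Ici a₂, r/m - 8/r ≤ φ r ∧ φ r ≤ r/m) :
    ∀ᶠ r in atTop, r^3 * (φ r - r/m + 1/r) ≤ m*(m-3) + 2*ε₀ := by
  have hm0 : (0:ℝ) < m := lt_of_lt_of_le one_pos hm
  set b := m*(m-3) + ε₀ with hbdef
  set K := |b*m - 7*b - m| + |3*b*m + 2*b^2| + 3*b^2*m + |b|^3*m with hKdef
  have hK0 : 0 ≤ K := by positivity
  set A := max a₂ (2*m*(K+1)/ε₀ + |b| + 1) with hAdef
  have hAa₂ : a₂ ≤ A := le_max_left _ _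
  have hA2 : 2*m*(K+1)/ε₀ + |b| + 1 ≤ A := le_max_right _ _
  have hA1 : (1:ℝ) ≤ A := le_trans (by linarith) (le_trans ha₂m hAa₂)
  have hA0 : (0:ℝ) < A := lt_of_lt_of_le one_pos hA1
  have hbm : 3 - m + b/m = ε₀/m := by rw [hbdef]; field_simp; ring
  set B : ℝ → ℝ := fun r => r/m - 1/r + b/r^3 with hBdef
  set B' : ℝ → ℝ := fun r => 1/m + 1/r^2 - 3*b/r^4 with hB'def
  set ψ : ℝ → ℝ := fun r => φ r - B r with hψdef
  set ψ' : ℝ → ℝ := fun r => (1 + φ r ^ 2) * (1 - m * φ r / r) - B' r with hψ'def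
  have hψd : ∀ r ∈ Ici A, HasDerivWithinAt ψ (ψ' r) (Ici A) r := by
    intro r hr
    have hr0 : r ≠ 0 := ne_of_gt (lt_of_lt_of_le hA0 hr)
    have hsub : Ici A ⊆ Ici R := Ici_subset_Ici.2 (le_trans ha₂R hAa₂)
    exact ((hφ r (hsub hr)).mono hsub).sub
      ((hasDerivAt_barrier m b r (ne_of_gt hm0) hr0).hasDerivWithinAt)
  have hkey : ∀ r ∈ Ici A, 0 ≤ ψ r → ψ' r ≤ -(ψ r * r / (8*m)) := by
    intro r hr h0
    have hrA : A ≤ r := hr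
    have hr1 : (1:ℝ) ≤ r := le_trans hA1 hrA
    have hr40 : 40*m ≤ r := by linarith [le_trans ha₂m (le_trans hAa₂ hrA)]
    have hrb : |b| ≤ r := by
      have h1 : (0:ℝ) ≤ 2*m*(K+1)/ε₀ := by positivity
      linarith [le_trans hA2 hrA]
    have hrK : 2*m*(K+1) ≤ ε₀ * r := by
      have h1 : 2*m*(K+1)/ε₀ ≤ r := by
        have h2 : (0:ℝ) ≤ |b| := abs_nonneg b
        linarith [le_trans hA2 hrA]
      rw [div_le_iff₀ hε₀] at h1
      linarith [h1]
    obtain ⟨hlow, hup⟩ := hstrip r (le_trans hAa₂ hrA)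
    have hB0 : B r ≤ φ r := by
      have := h0
      simp only [hψdef, hBdef] at this ⊢
      linarith
    have hku := key_upper hm hε₀ hbm hr1 hrb hr40 hrK hlow hup hB0
    simp only [hψdef, hψ'def, hBdef, hB'def]
    linarith [hku]
  have happ := exp_comparison hm0 hA0 hψd hkey
  set C := (|ψ A| + 1) * Real.exp (A^2/(32*m)) with hCdef
  have hC0 : 0 < C := by positivity
  have hdecay : Tendsto (fun r => C * (r^3 * Real.exp (-(r^2/(32*m))))) atTop (nhds 0) := by
    have h := (cube_exp_decay m hm0).const_mul C
    simpa using h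
  filter_upwards [eventually_ge_atTop A, hdecay.eventually_lt_const hε₀] with r hrA hrdecay
  have hr0 : (0:ℝ) < r := lt_of_lt_of_le hA0 hrA
  have hψr := happ r hrA
  have h1 : φ r - r/m + 1/r ≤ b/r^3 + C * Real.exp (-(r^2/(32*m))) := by
    simp only [hψdef, hBdef] at hψr
    linarith [hψr]
  have h2 := mul_le_mul_of_nonneg_left h1 (by positivity : (0:ℝ) ≤ r^3)
  have e1 : r^3 * (b/r^3) = b := by field_simp
  have e2 : r^3 * (b/r^3 + C * Real.exp (-(r^2/(32*m))))
      = b + C * (r^3 * Real.exp (-(r^2/(32*m)))) := by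
    rw [mul_add, e1]; ring
  rw [e2] at h2
  have : b + C * (r^3 * Real.exp (-(r^2/(32*m)))) ≤ b + ε₀ := by linarith [hrdecay]
  calc r^3 * (φ r - r/m + 1/r) ≤ b + ε₀ := le_trans h2 this
  _ = m*(m-3) + 2*ε₀ := by rw [hbdef]; ring

lemma lower_bound_lemma {R m ε₀ : ℝ} (hm : 1 ≤ m) (hε₀ : 0 < ε₀) {φ : ℝ → ℝ}
    (hφ : ∀ r ∈ Ici R, HasDerivWithinAt φ ((1 + φ r ^ 2) * (1 - m * φ r / r)) (Ici R) r)
    {a₂ : ℝ} (ha₂R : R ≤ a₂) (ha₂m : 40*m + 40 ≤ a₂)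
    (hstrip : ∀ r ∈ Ici a₂, r/m - 8/r ≤ φ r ∧ φ r ≤ r/m) :
    ∀ᶠ r in atTop, m*(m-3) - 2*ε₀ ≤ r^3 * (φ r - r/m + 1/r) := by
  have hm0 : (0:ℝ) < m := lt_of_lt_of_le one_pos hm
  set b := m*(m-3) - ε₀ with hbdef
  set K := |b*m - 7*b - m| + |3*b*m + 2*b^2| + 3*b^2*m + |b|^3*m with hKdef
  have hK0 : 0 ≤ K := by positivity
  set A := max a₂ (2*m*(K+1)/ε₀ + |b| + 1) with hAdef
  have hAa₂ : a₂ ≤ A := le_max_left _ _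
  have hA2 : 2*m*(K+1)/ε₀ + |b| + 1 ≤ A := le_max_right _ _
  have hA1 : (1:ℝ) ≤ A := le_trans (by linarith) (le_trans ha₂m hAa₂)
  have hA0 : (0:ℝ) < A := lt_of_lt_of_le one_pos hA1
  have hbm : 3 - m + b/m = -(ε₀/m) := by rw [hbdef]; field_simp; ring
  set B : ℝ → ℝ := fun r => r/m - 1/r + b/r^3 with hBdef
  set B' : ℝ → ℝ := fun r => 1/m + 1/r^2 - 3*b/r^4 with hB'def
  set ψ : ℝ → ℝ := fun r => B r - φ r with hψdef
  set ψ' : ℝ → ℝ := fun r => B' r - (1 + φ r ^ 2) * (1 - m * φ r / r) with hψ'def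
  have hψd : ∀ r ∈ Ici A, HasDerivWithinAt ψ (ψ' r) (Ici A) r := by
    intro r hr
    have hr0 : r ≠ 0 := ne_of_gt (lt_of_lt_of_le hA0 hr)
    have hsub : Ici A ⊆ Ici R := Ici_subset_Ici.2 (le_trans ha₂R hAa₂)
    exact ((hasDerivAt_barrier m b r (ne_of_gt hm0) hr0).hasDerivWithinAt).sub
      ((hφ r (hsub hr)).mono hsub)
  have hkey : ∀ r ∈ Ici A, 0 ≤ ψ r → ψ' r ≤ -(ψ r * r / (8*m)) := by
    intro r hr h0
    have hrA : A ≤ r := hr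
    have hr1 : (1:ℝ) ≤ r := le_trans hA1 hrA
    have hr40 : 40*m ≤ r := by linarith [le_trans ha₂m (le_trans hAa₂ hrA)]
    have hrb : |b| ≤ r := by
      have h1 : (0:ℝ) ≤ 2*m*(K+1)/ε₀ := by positivity
      linarith [le_trans hA2 hrA]
    have hrK : 2*m*(K+1) ≤ ε₀ * r := by
      have h1 : 2*m*(K+1)/ε₀ ≤ r := by
        have h2 : (0:ℝ) ≤ |b| := abs_nonneg b
        linarith [le_trans hA2 hrA]
      rw [div_le_iff₀ hε₀] at h1
      linarith [h1]
    obtain ⟨hlow, hup⟩ := hstrip r (le_trans hAa₂ hrA)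
    have hB0 : φ r ≤ B r := by
      have := h0
      simp only [hψdef, hBdef] at this ⊢
      linarith
    have hkl := key_lower hm hε₀ hbm hr1 hrb hr40 hrK hlow hup hB0
    simp only [hψdef, hψ'def, hBdef, hB'def]
    linarith [hkl]
  have happ := exp_comparison hm0 hA0 hψd hkey
  set C := (|ψ A| + 1) * Real.exp (A^2/(32*m)) with hCdef
  have hC0 : 0 < C := by positivity
  have hdecay : Tendsto (fun r => C * (r^3 * Real.exp (-(r^2/(32*m))))) atTop (nhds 0) := by
    have h := (cube_exp_decay m hm0).const_mul C
    simpa using h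
  filter_upwards [eventually_ge_atTop A, hdecay.eventually_lt_const hε₀] with r hrA hrdecay
  have hr0 : (0:ℝ) < r := lt_of_lt_of_le hA0 hrA
  have hψr := happ r hrA
  have h1 : b/r^3 - C * Real.exp (-(r^2/(32*m))) ≤ φ r - r/m + 1/r := by
    simp only [hψdef, hBdef] at hψr
    linarith [hψr]
  have h2 := mul_le_mul_of_nonneg_left h1 (by positivity : (0:ℝ) ≤ r^3)
  have e1 : r^3 * (b/r^3) = b := by field_simp
  have e2 : r^3 * (b/r^3 - C * Real.exp (-(r^2/(32*m))))
      = b - C * (r^3 * Real.exp (-(r^2/(32*m)))) := by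
    rw [mul_sub, e1]; ring
  rw [e2] at h2
  have h3 : b - ε₀ ≤ b - C * (r^3 * Real.exp (-(r^2/(32*m)))) := by linarith [hrdecay]
  calc m*(m-3) - 2*ε₀ = b - ε₀ := by rw [hbdef]; ring
  _ ≤ r^3 * (φ r - r/m + 1/r) := le_trans h3 h2

theorem translator_ode_third_order {n : ℕ} (hn : 2 ≤ n) (R : ℝ) (hR : 0 < R)
    (φ : ℝ → ℝ)
    (hφ : ∀ r ∈ Ici R,
      HasDerivWithinAt φ ((1 + φ r ^ 2) * (1 - ((n : ℝ) - 1) * φ r / r)) (Ici R) r) :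
    Tendsto (fun r => r ^ 3 * (φ r - r / ((n : ℝ) - 1) + 1 / r)) atTop
      (nhds (((n : ℝ) - 4) * ((n : ℝ) - 1))) := by
  have hmcast : (2:ℝ) ≤ (n:ℝ) := by exact_mod_cast hn
  set m : ℝ := (n:ℝ) - 1 with hmdef
  have hm : 1 ≤ m := by rw [hmdef]; linarith
  have hm0 : (0:ℝ) < m := lt_of_lt_of_le one_pos hm
  have hL : ((n:ℝ) - 4) * m = m*(m-3) := by rw [hmdef]; ring
  rw [hL]
  obtain ⟨a₂, ha₂R, ha₂m, hstrip⟩ := strip_lemma hR hm hφ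
  rw [Metric.tendsto_nhds]
  intro ε hε
  have hε₀ : (0:ℝ) < ε/4 := by linarith
  filter_upwards [upper_bound_lemma hm hε₀ hφ ha₂R ha₂m hstrip,
    lower_bound_lemma hm hε₀ hφ ha₂R ha₂m hstrip] with r hub hlb
  rw [Real.dist_eq, abs_sub_lt_iff]
  constructor <;> linarith [hub, hlb]
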